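/- Let X be a nonempty finite type, let d be a pmf on X, let p_n be a pmf on X with p_n x > 0 for every x, and let ν > 0. For f : X → ℝ with f x > 0 for all x, define σ_f x = f x / (f x + ν * p_n x) and σ_d x = d x / (d x + ν * p_n x). Then J(d) − J(f) = Σ_x (d x + ν * p_n x) * D_B(σ_d x ‖ σ_f x), where D_B(u ‖ v) = u * log (u / v) + (1 − u) * log ((1 − u) / (1 − v)) is the Bernoulli KL divergence (with the convention 0 * log 0 = 0). In particular J(f) ≤ J(d). -/

import Mathlib

open Real Finset

lemma aux_log_lb (a c : ℝ) (ha : 0 ≤ a) (hc : 0 < c) :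
    a - c ≤ a * Real.log (a / c) := by
  rcases eq_or_lt_of_le ha with h | h
  · simp [← h]; linarith
  · have hl := Real.log_le_sub_one_of_pos (show 0 < c / a from div_pos hc h)
    have hinv : Real.log (c / a) = - Real.log (a / c) := by
      rw [← Real.log_inv, inv_div]
    rw [hinv] at hl
    have h2 := mul_le_mul_of_nonneg_left hl h.le
    have h3 : a * (c / a) = c := by field_simp
    nlinarith

lemma kl_nonneg (u v : ℝ) (hu0 : 0 ≤ u) (hu1 : u ≤ 1) (hv0 : 0 < v) (hv1 : v < 1) :
    0 ≤ u * Real.log (u / v) + (1 - u) * Real.log ((1 - u) / (1 - v)) := by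
  have h1 := aux_log_lb u v hu0 hv0
  have h2 := aux_log_lb (1 - u) (1 - v) (by linarith) (by linarith)
  linarith

lemma term_eq (A B F : ℝ) (hA : 0 ≤ A) (hB : 0 < B) (hF : 0 < F) :
    (A * Real.log (A / (A + B)) + B * Real.log (B / (A + B)))
      - (A * Real.log (F / (F + B)) + B * Real.log (B / (F + B)))
    = (A + B) * ((A / (A + B)) * Real.log ((A / (A + B)) / (F / (F + B)))
        + (1 - A / (A + B)) * Real.log ((1 - A / (A + B)) / (1 - F / (F + B)))) := by
  have hs : 0 < A + B := by linarith
  have ht : 0 < F + B := by linarith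
  have h1 : 1 - A / (A + B) = B / (A + B) := by field_simp; ring
  have h2 : 1 - F / (F + B) = B / (F + B) := by field_simp; ring
  rw [h1, h2]
  have hBd : (B / (A + B)) / (B / (F + B)) = (F + B) / (A + B) := by
    field_simp
  rw [hBd]
  rcases eq_or_lt_of_le hA with h | h
  · subst h
    simp only [zero_div, zero_mul, zero_add, mul_zero]
    have : Real.log (B / (F + B)) = - Real.log ((F + B) / B) := by
      rw [← Real.log_inv, inv_div]
    rw [this]
    simp only [zero_add] at *
    rw [div_self hB.ne', Real.log_one]
    ring
  · have e1 : (A / (A + B)) / (F / (F + B)) = (A * (F + B)) / ((A + B) * F) := by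
      field_simp
    rw [e1]
    rw [Real.log_div (by positivity) (by positivity),
        Real.log_div (by positivity) (by positivity),
        Real.log_div (by positivity) (by positivity),
        Real.log_div (by positivity) (by positivity),
        Real.log_div (by positivity) (by positivity),
        Real.log_div (by positivity) (by positivity),
        Real.log_mul (by positivity) (by positivity),
        Real.log_mul (by positivity) (by positivity)]
    field_simp
    ring

theorem stmt_6 {X : Type*} [Fintype X] [Nonempty X]
    (d pn : X → ℝ)
    (hd0 : ∀ x, 0 ≤ d x) (hd1 : ∑ x, d x = 1)
    (hpn0 : ∀ x, 0 < pn x) (hpn1 : ∑ x, pn x = 1)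
    (ν : ℝ) (hν : 0 < ν)
    (f : X → ℝ) (hf : ∀ x, 0 < f x)
    (J : (X → ℝ) → ℝ)
    (hJ : ∀ g : X → ℝ, J g = ∑ x, d x * Real.log (g x / (g x + ν * pn x))
        + ν * ∑ x, pn x * Real.log (ν * pn x / (g x + ν * pn x)))
    (σf σd : X → ℝ)
    (hσf : ∀ x, σf x = f x / (f x + ν * pn x))
    (hσd : ∀ x, σd x = d x / (d x + ν * pn x)) :
    J d - J f = ∑ x, (d x + ν * pn x) *
        (σd x * Real.log (σd x / σf x)
          + (1 - σd x) * Real.log ((1 - σd x) / (1 - σf x))) ∧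
      J f ≤ J d := by
  have hB : ∀ x, 0 < ν * pn x := fun x => mul_pos hν (hpn0 x)
  have hmain : J d - J f = ∑ x, (d x + ν * pn x) *
      (σd x * Real.log (σd x / σf x)
        + (1 - σd x) * Real.log ((1 - σd x) / (1 - σf x))) := by
    have step : J d - J f = ∑ x,
        ((d x * Real.log (d x / (d x + ν * pn x))
          + ν * pn x * Real.log (ν * pn x / (d x + ν * pn x)))
        - (d x * Real.log (f x / (f x + ν * pn x))
          + ν * pn x * Real.log (ν * pn x / (f x + ν * pn x)))) := by
      rw [hJ, hJ, Finset.mul_sum, Finset.mul_sum,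
        ← Finset.sum_add_distrib, ← Finset.sum_add_distrib, ← Finset.sum_sub_distrib]
      exact Finset.sum_congr rfl fun x _ => by ring
    rw [step]
    refine Finset.sum_congr rfl fun x _ => ?_
    rw [hσd, hσf]
    exact term_eq (d x) (ν * pn x) (f x) (hd0 x) (hB x) (hf x)
  refine ⟨hmain, ?_⟩
  have hnn : 0 ≤ ∑ x, (d x + ν * pn x) *
      (σd x * Real.log (σd x / σf x)
        + (1 - σd x) * Real.log ((1 - σd x) / (1 - σf x))) := by
    refine Finset.sum_nonneg fun x _ => ?_
    have hsx : 0 < d x + ν * pn x := by have := hd0 x; have := hB x; linarith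
    have htx : 0 < f x + ν * pn x := by have := hf x; have := hB x; linarith
    refine mul_nonneg hsx.le ?_
    refine kl_nonneg _ _ ?_ ?_ ?_ ?_
    · rw [hσd]; exact div_nonneg (hd0 x) hsx.le
    · rw [hσd]; exact (div_le_one hsx).2 (by have := hB x; linarith)
    · rw [hσf]; exact div_pos (hf x) htx
    · rw [hσf]; exact (div_lt_one htx).2 (by have := hB x; linarith)
  linarith
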